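/- For all μ, μ' ∈ I, kl(μ, μ') ≥ (μ − μ')²/(2V). -/

import Mathlib

open MeasureTheory Real Set

lemma kl_key (S : Set ℝ) (hconv : Convex ℝ S)
    (b b' b'' : ℝ → ℝ)
    (hb' : ∀ θ ∈ S, HasDerivAt b (b' θ) θ)
    (hb'' : ∀ θ ∈ S, HasDerivAt b' (b'' θ) θ)
    (hbpos : ∀ θ ∈ S, 0 < b'' θ)
    (V : ℝ) (hV : 0 < V) (hbV : ∀ θ ∈ S, b'' θ ≤ V)
    (θ θ' : ℝ) (hθ : θ ∈ S) (hθ' : θ' ∈ S) :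
    (b' θ - b' θ') ^ 2 / (2 * V) ≤ b θ' - b θ - b' θ * (θ' - θ) := by
  -- Lipschitz estimate for b'
  have hlip : ∀ x ∈ S, ∀ y ∈ S, |b' y - b' x| ≤ V * |y - x| := by
    intro x hx y hy
    have := hconv.norm_image_sub_le_of_norm_hasDerivWithin_le
      (f := b') (f' := b'')
      (fun t ht => (hb'' t ht).hasDerivWithinAt)
      (fun t ht => by
        rw [Real.norm_eq_abs, abs_of_pos (hbpos t ht)]; exact hbV t ht)
      hx hy
    simpa [Real.norm_eq_abs] using this
  set F : ℝ → ℝ := fun t => b θ' - b t - b' t * (θ' - t) - (b' t - b' θ') ^ 2 / (2 * V) with hF_def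
  have hF : ∀ t ∈ S, HasDerivAt F (b'' t * ((t - θ') - (b' t - b' θ') / V)) t := by
    intro t ht
    have h1 := hb' t ht
    have h2 := hb'' t ht
    have hA : HasDerivAt (fun u => b' u * (θ' - u)) (b'' t * (θ' - t) + b' t * (-1)) t :=
      h2.mul ((hasDerivAt_id t).const_sub θ')
    have hB : HasDerivAt (fun u => (b' u - b' θ') ^ 2) ((2 : ℕ) * (b' t - b' θ') ^ 1 * b'' t) t :=
      (h2.sub_const (b' θ')).pow 2
    have := (((hasDerivAt_const t (b θ')).sub h1).sub hA).sub (hB.div_const (2 * V))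
    refine this.congr_deriv ?_
    field_simp
    ring
  have hFθ' : F θ' = 0 := by simp [hF_def]
  have hub : F θ' ≤ F θ := by
    rcases le_total θ' θ with hle | hle
    · have hsub : Icc θ' θ ⊆ S := hconv.ordConnected.out hθ' hθ
      have mono : MonotoneOn F (Icc θ' θ) := by
        apply monotoneOn_of_deriv_nonneg (convex_Icc _ _)
        · exact fun t ht => ((hF t (hsub ht)).differentiableAt.continuousAt).continuousWithinAt
        · intro t ht
          rw [interior_Icc] at ht
          exact (hF t (hsub (Ioo_subset_Icc_self ht))).differentiableAt.differentiableWithinAt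
        · intro t ht
          rw [interior_Icc] at ht
          have htS : t ∈ S := hsub (Ioo_subset_Icc_self ht)
          rw [(hF t htS).deriv]
          have h1 : b' t - b' θ' ≤ V * (t - θ') := by
            have h := hlip θ' hθ' t htS
            have habs : |t - θ'| = t - θ' := abs_of_pos (by linarith [ht.1])
            rw [habs] at h
            exact (le_abs_self _).trans h
          have h2 : (b' t - b' θ') / V ≤ t - θ' := by
            rw [div_le_iff₀ hV]; linarith
          exact mul_nonneg (hbpos t htS).le (by linarith)
      exact mono (left_mem_Icc.2 hle) (right_mem_Icc.2 hle) hle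
    · have hsub : Icc θ θ' ⊆ S := hconv.ordConnected.out hθ hθ'
      have anti : AntitoneOn F (Icc θ θ') := by
        apply antitoneOn_of_deriv_nonpos (convex_Icc _ _)
        · exact fun t ht => ((hF t (hsub ht)).differentiableAt.continuousAt).continuousWithinAt
        · intro t ht
          rw [interior_Icc] at ht
          exact (hF t (hsub (Ioo_subset_Icc_self ht))).differentiableAt.differentiableWithinAt
        · intro t ht
          rw [interior_Icc] at ht
          have htS : t ∈ S := hsub (Ioo_subset_Icc_self ht)
          rw [(hF t htS).deriv]
          have h1 : b' θ' - b' t ≤ V * (θ' - t) := by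
            have h := hlip t htS θ' hθ'
            have habs : |θ' - t| = θ' - t := abs_of_pos (by linarith [ht.2])
            rw [habs] at h
            exact (le_abs_self _).trans h
          have h2 : t - θ' ≤ (b' t - b' θ') / V := by
            rw [le_div_iff₀ hV]; nlinarith
          exact mul_nonpos_of_nonneg_of_nonpos (hbpos t htS).le (by linarith)
      exact anti (left_mem_Icc.2 hle) (right_mem_Icc.2 hle) hle
  have : 0 ≤ F θ := hFθ' ▸ hub
  simp only [hF_def] at this
  linarith

/-- For all `μ, μ' ∈ I`, `kl μ μ' ≥ (μ - μ')² / (2V)`. -/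
theorem kl_ge_sq_div_two_var
    (ρ : Measure ℝ) [SigmaFinite ρ]
    (Θ : Set ℝ) (hΘ : Θ = {θ : ℝ | Integrable (fun x => exp (θ * x)) ρ})
    (b b' b'' : ℝ → ℝ)
    (hb : ∀ θ ∈ Θ, b θ = log (∫ x, exp (θ * x) ∂ρ))
    (hb' : ∀ θ ∈ interior Θ, HasDerivAt b (b' θ) θ)
    (hb'' : ∀ θ ∈ interior Θ, HasDerivAt b' (b'' θ) θ)
    (hbpos : ∀ θ ∈ interior Θ, 0 < b'' θ)
    (Iset : Set ℝ) (hI : Iset = b' '' (interior Θ))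
    (kl : ℝ → ℝ → ℝ)
    (hkl : ∀ θ ∈ interior Θ, ∀ θ' ∈ interior Θ,
      kl (b' θ) (b' θ') = b θ' - b θ - b' θ * (θ' - θ))
    (V : ℝ) (hV : 0 < V) (hbV : ∀ θ ∈ interior Θ, b'' θ ≤ V) :
    ∀ μ ∈ Iset, ∀ μ' ∈ Iset, (μ - μ') ^ 2 / (2 * V) ≤ kl μ μ' := by
  have hΘconv : Convex ℝ Θ := by
    rw [hΘ]
    intro a ha c hc t s ht hs hts
    simp only [mem_setOf_eq, smul_eq_mul] at *
    have hmeas : AEStronglyMeasurable (fun x => exp ((t * a + s * c) * x)) ρ :=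
      (Real.continuous_exp.comp (continuous_const.mul continuous_id)).aestronglyMeasurable
    refine Integrable.mono' ((ha.const_mul t).add (hc.const_mul s)) hmeas ?_
    filter_upwards with x
    rw [Real.norm_eq_abs, abs_of_pos (exp_pos _)]
    have key : exp ((t * a + s * c) * x) = exp (a * x) ^ t * exp (c * x) ^ s := by
      rw [← Real.exp_mul, ← Real.exp_mul, ← Real.exp_add]
      ring_nf
    rw [key]
    exact Real.geom_mean_le_arith_mean2_weighted ht hs (exp_pos _).le (exp_pos _).le hts
  have hSconv : Convex ℝ (interior Θ) := hΘconv.interior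
  intro μ hμ μ' hμ'
  rw [hI] at hμ hμ'
  obtain ⟨θ, hθ, rfl⟩ := hμ
  obtain ⟨θ', hθ', rfl⟩ := hμ'
  rw [hkl θ hθ θ' hθ']
  exact kl_key (interior Θ) hSconv b b' b'' hb' hb'' hbpos V hV hbV θ θ' hθ hθ'
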